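/- Let S be the (d+2)×(d+2) block-diagonal matrix S = diag(I₂, ¼ I_d) and for each j ∈ {1,…,d} let A^j(U) be the matrix with entries A^j_{k,k}(U) = U_{j+2} for all k, A^j_{1,j+2}(U) = U₁/2, A^j_{2,j+2}(U) = U₂/2, A^j_{j+2,1}(U) = 2U₁, A^j_{j+2,2}(U) = 2U₂, and zero otherwise. Then S is symmetric positive definite and S A^j(U) is a symmetric matrix for every U ∈ ℝ^{d+2} and every j. -/
import Mathlib


/-- Index `j+2` in `Fin (d+2)`, for `j : Fin d`. -/
def jdx {d : ℕ} (j : Fin d) : Fin (d+2) := ⟨j.1 + 2, by omega⟩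

/-- The symmetrizer `S = diag(I₂, ¼ I_d)`. -/
noncomputable def Smat (d : ℕ) : Matrix (Fin (d+2)) (Fin (d+2)) ℝ :=
  Matrix.diagonal fun k => if (k : ℕ) < 2 then 1 else 1/4

/-- The matrix `A^j(U)` of the symmetrized hyperbolic system. -/
noncomputable def Amat {d : ℕ} (j : Fin d) (U : Fin (d+2) → ℝ) :
    Matrix (Fin (d+2)) (Fin (d+2)) ℝ :=
  Matrix.of fun k l =>
    (if k = l then U (jdx j) else 0)
    + (if k = 0 ∧ l = jdx j then U 0 / 2 else 0)
    + (if k = 1 ∧ l = jdx j then U 1 / 2 else 0)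
    + (if k = jdx j ∧ l = 0 then 2 * U 0 else 0)
    + (if k = jdx j ∧ l = 1 then 2 * U 1 else 0)

/-- `S` is symmetric positive definite and `S A^j(U)` is symmetric
for every `U ∈ ℝ^{d+2}` and every `j`. -/
theorem stmt_3 (d : ℕ) :
    (Smat d).IsSymm ∧ (Smat d).PosDef ∧
    ∀ (U : Fin (d+2) → ℝ) (j : Fin d), (Smat d * Amat j U).IsSymm := by
  refine ⟨Matrix.isSymm_diagonal _, ?_, ?_⟩
  · rw [Smat, Matrix.posDef_diagonal_iff]
    intro i; split_ifs <;> norm_num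
  · intro U j
    have h0 : jdx j ≠ 0 := by simp [jdx, Fin.ext_iff]
    have h1 : jdx j ≠ 1 := by simp [jdx, Fin.ext_iff]
    have h2 : ¬ ((jdx j : ℕ) < 2) := by simp [jdx]
    rw [Matrix.IsSymm]
    ext k l
    simp only [Matrix.transpose_apply, Smat, Amat, Matrix.diagonal_mul, Matrix.of_apply]
    rcases eq_or_ne k l with rfl | hkl
    · rfl
    rw [if_neg hkl, if_neg (Ne.symm hkl)]
    by_cases hkj : k = jdx j <;> by_cases hlj : l = jdx j
    · exact absurd (hkj.trans hlj.symm) hkl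
    · subst hkj
      by_cases hl0 : l = 0
      · subst hl0; simp [h0, h1, h2, Ne.symm h0]; ring
      · by_cases hl1 : l = 1
        · subst hl1; simp [h0, h1, h2, Ne.symm h1]; ring
        · simp [h0, h1, hl0, hl1, Ne.symm hl0, Ne.symm hl1, hlj, Ne.symm hlj]
    · subst hlj
      by_cases hk0 : k = 0
      · subst hk0; simp [h0, h1, h2, Ne.symm h0]; ring
      · by_cases hk1 : k = 1
        · subst hk1; simp [h0, h1, h2, Ne.symm h1]; ring
        · simp [h0, h1, hk0, hk1, Ne.symm hk0, Ne.symm hk1, hkj, Ne.symm hkj]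
    · simp [hkj, hlj, Ne.symm hkj, Ne.symm hlj]
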